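/- For all integers n, l0 with 1 ≤ l0 ≤ n−1, and every real polynomial q of degree l0+1 with q(0) = 0, the function q(z) · Σ_{l=0}^{l0+1} C^{(l)}_{n,l0+1} · P_{n−l}(z) lies in the real linear span of {P_{n−l0}(z), P_{n−l0+1}(z), …, P_{n+l0+1}(z)}. -/
import Mathlib


open Finset

/-- Pochhammer symbol `(a)_k = a (a+1) ⋯ (a+k-1)`. -/
noncomputable def poch (a : ℝ) (k : ℕ) : ℝ := ∏ i ∈ Finset.range k, (a + (i : ℝ))

/-- The Hendriksen–van Rossum polynomial `P_n(z; α, β)`. -/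
noncomputable def HR (α β : ℝ) (n : ℕ) (z : ℝ) : ℝ :=
  (poch β n / poch (α + 1) n) *
    ∑ k ∈ Finset.range (n + 1),
      poch (-(n : ℝ)) k * poch (α + 1) k /
          (poch (1 - β - (n : ℝ)) k * (Nat.factorial k : ℝ)) * z ^ k

/-- `d_m(α,β) = −(m+β)/(m+α+1)`. -/
noncomputable def dco (α β m : ℝ) : ℝ := -(m + β) / (m + α + 1)

/-- `b_m(α,β) = −m(m+α+β)/((m+α)(m+α+1))`. -/
noncomputable def bco (α β m : ℝ) : ℝ := -(m * (m + α + β)) / ((m + α) * (m + α + 1))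

/-- Connection coefficients `C^{(l)}_{n,j}` (computed with parameters `(α,β)`):
`C^{(0)}_{n,j} = 1`; `C^{(1)}_{n,j} = Σ_{k=0}^{j−1} b_n(α+k, β−k)`;
`C^{(j)}_{n,j} = Π_{k=0}^{j−1} b_{n−k}(α+j−1−k, β−j+1+k)`;
`C^{(l)}_{n,j} = C^{(l)}_{n,j−1} + b_n(α+j−1, β−j+1)·C^{(l−1)}_{n−1,j−1}` for `2 ≤ l ≤ j−1`;
and `0` out of range. Arguments: `Ccoef α β n j l`. -/
noncomputable def Ccoef (α β : ℝ) : ℕ → ℕ → ℕ → ℝ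
  | _, _, 0 => 1
  | n, j, 1 =>
      if 1 ≤ j then ∑ k ∈ Finset.range j, bco (α + (k : ℝ)) (β - (k : ℝ)) (n : ℝ) else 0
  | _, 0, (_ + 2) => 0
  | n, (j + 1), (l + 2) =>
      if l + 2 = j + 1 then
        ∏ k ∈ Finset.range (j + 1),
          bco (α + (j : ℝ) - (k : ℝ)) (β - (j : ℝ) + (k : ℝ)) ((n : ℝ) - (k : ℝ))
      else if l + 2 ≤ j then
        Ccoef α β n j (l + 2)
          + bco (α + (j : ℝ)) (β - (j : ℝ)) (n : ℝ) * Ccoef α β (n - 1) j (l + 1)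
      else 0

set_option maxHeartbeats 1000000

/- ### poch basics -/

lemma poch_zero (a : ℝ) : poch a 0 = 1 := by simp [poch]
lemma poch_succ (a : ℝ) (k : ℕ) : poch a (k+1) = poch a k * (a + k) := by
  simp [poch, Finset.prod_range_succ]
lemma poch_succ' (a : ℝ) (k : ℕ) : poch a (k+1) = a * poch (a+1) k := by
  rw [poch, Finset.prod_range_succ']
  rw [mul_comm]; congr 1
  · simp
  · rw [poch]; apply Finset.prod_congr rfl; intro i _; push_cast; ring
lemma poch_shift (a : ℝ) (k : ℕ) : poch (a+1) k * a = poch a k * (a + k) := by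
  rw [mul_comm, ← poch_succ', poch_succ]
lemma poch_ne_zero {a : ℝ} {k : ℕ} (h : ∀ i : ℕ, i < k → a + i ≠ 0) : poch a k ≠ 0 :=
  Finset.prod_ne_zero_iff.mpr (fun i hi => h i (Finset.mem_range.mp hi))
lemma poch_neg_nat {m k : ℕ} (h : m < k) : poch (-(m:ℝ)) k = 0 :=
  Finset.prod_eq_zero (Finset.mem_range.mpr h) (by simp)

/- ### Ccoef recurrences -/

lemma bco_zero (a b : ℝ) : bco a b 0 = 0 := by simp [bco]

lemma Ccoef_out (α β : ℝ) (n j l : ℕ) (h : j < l) : Ccoef α β n j l = 0 := by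
  match j, l with
  | j, 0 => omega
  | j, 1 => rw [Ccoef, if_neg (by omega)]
  | 0, (l+2) => rw [Ccoef]
  | (j+1), (l+2) => rw [Ccoef, if_neg (by omega), if_neg (by omega)]

lemma Ccoef_zero (α β : ℝ) (n j : ℕ) : Ccoef α β n j 0 = 1 := by rw [Ccoef]

lemma Ccoef_diag (α β : ℝ) (n j : ℕ) : Ccoef α β n (j+1) (j+1) =
    ∏ k ∈ Finset.range (j + 1),
      bco (α + (j : ℝ) - (k : ℝ)) (β - (j : ℝ) + (k : ℝ)) ((n : ℝ) - (k : ℝ)) := by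
  match j with
  | 0 => rw [Ccoef, if_pos (by omega)]; simp
  | (j+1) => rw [Ccoef, if_pos rfl]

lemma Ccoef_rec (α β : ℝ) (n j l : ℕ) :
    Ccoef α β n (j+1) (l+1) = Ccoef α β n j (l+1)
      + bco (α + (j : ℝ)) (β - (j : ℝ)) (n : ℝ) * Ccoef α β (n - 1) j l := by
  match l with
  | 0 =>
    rw [show Ccoef α β (n-1) j 0 = 1 from by rw [Ccoef],
        show Ccoef α β n (j+1) 1 = _ from by rw [Ccoef, if_pos (by omega : 1 ≤ j+1)],
        Finset.sum_range_succ]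
    match j with
    | 0 => simp [Ccoef]
    | (j+1) =>
      rw [show Ccoef α β n (j+1) 1 = _ from by rw [Ccoef, if_pos (by omega : 1 ≤ j+1)]]
      ring
  | (l+1) =>
    rcases lt_trichotomy (l+2) (j+1) with h | h | h
    · rw [Ccoef, if_neg (by omega), if_pos (by omega)]
    · have hj : l + 1 = j := by omega
      subst hj
      rw [Ccoef, if_pos rfl, Ccoef_out α β n (l+1) (l+2) (by omega), zero_add]
      match n with
      | 0 =>
        rw [Finset.prod_range_succ']
        have h1 : bco (α + ((l+1:ℕ) : ℝ) - ((0:ℕ):ℝ)) (β - ((l+1:ℕ):ℝ) + ((0:ℕ):ℝ)) (((0:ℕ):ℝ) - ((0:ℕ):ℝ)) = 0 := by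
          norm_num [bco]
        rw [h1, mul_zero]
        have h2 : bco (α + ((l+1:ℕ) : ℝ)) (β - ((l+1:ℕ):ℝ)) ((0:ℕ):ℝ) = 0 := by
          norm_num [bco]
        rw [h2, zero_mul]
      | (n+1) =>
        rw [Ccoef_diag, Finset.prod_range_succ']
        push_cast
        rw [mul_comm]
        congr 1
        · norm_num
        · apply Finset.prod_congr rfl; intro i _
          congr 1 <;> ring
    · rw [Ccoef, if_neg (by omega), if_neg (by omega),
          Ccoef_out α β n j (l+2) (by omega),
          Ccoef_out α β (n-1) j (l+1) (by omega)]
      ring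

lemma lemA (α β : ℝ) (hα : ∀ m : ℤ, α ≠ (m : ℝ)) (hβ : ∀ m : ℤ, β ≠ (m : ℝ))
    (hαβ : ∀ m : ℤ, α + β ≠ (m : ℝ)) (n : ℕ) (z : ℝ) :
    HR (α+1) (β-1) n z = HR α β n z + bco α β n * HR α β (n-1) z := by
  match n with
  | 0 => norm_num [HR, poch, bco]
  | (m+1) =>
  have hm1 : ((m+1:ℕ):ℝ) = (m:ℝ)+1 := by push_cast; ring
  rw [show (m+1)-1 = m from rfl, HR, HR, HR]
  simp only [hm1]
  simp only [show 1 - (β-1) - ((m:ℝ)+1) = 1 - β - (m:ℝ) from by ring,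
             show 1 - β - ((m:ℝ)+1) = -β - (m:ℝ) from by ring]
  have hext : ∑ k ∈ Finset.range (m+1+1),
      (poch (-((m:ℝ))) k * poch (α+1) k / (poch (1-β-(m:ℝ)) k * (Nat.factorial k : ℝ)) * z^k)
      = ∑ k ∈ Finset.range (m+1),
      (poch (-((m:ℝ))) k * poch (α+1) k / (poch (1-β-(m:ℝ)) k * (Nat.factorial k : ℝ)) * z^k) := by
    rw [Finset.sum_range_succ, poch_neg_nat (Nat.lt_succ_self m)]
    simp
  rw [← hext]
  simp only [Finset.mul_sum]
  rw [← Finset.sum_add_distrib]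
  apply Finset.sum_congr rfl
  intro k hk
  have hαne : (α+1 : ℝ) ≠ 0 := fun h => hα (-1) (by push_cast; linarith)
  have h1 : (α+1+(m:ℝ)) ≠ 0 := fun h => hα (-(1+m)) (by push_cast; linarith)
  have h2 : (α+1+1+(m:ℝ)) ≠ 0 := fun h => hα (-(2+m)) (by push_cast; linarith)
  have h3 : ((k:ℝ)-β-(m:ℝ)) ≠ 0 := fun h => hβ ((k:ℤ)-m) (by push_cast; linarith)
  have h4 : (-β-(m:ℝ)) ≠ 0 := fun h => hβ (-(m:ℤ)) (by push_cast; linarith)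
  have h5 : (-((m:ℝ)+1)) ≠ 0 := neg_ne_zero.mpr (by positivity)
  have hA : poch (α+1) m ≠ 0 := poch_ne_zero (fun i _ h => hα (-(1+i)) (by push_cast; linarith))
  have hR : poch (1-β-(m:ℝ)) k ≠ 0 :=
    poch_ne_zero (fun i _ h => hβ (1-(m:ℤ)+i) (by push_cast; linarith))
  have hK : ((Nat.factorial k : ℕ):ℝ) ≠ 0 := Nat.cast_ne_zero.mpr (Nat.factorial_ne_zero k)
  have r1 : poch (β-1) (m+1) = (β-1) * poch β m := by
    rw [poch_succ', show (β-1)+1 = β from by ring]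
  have r2 : poch (α+1+1) (m+1) = poch (α+1) m * (α+1+(m:ℝ)) * (α+1+1+(m:ℝ)) / (α+1) := by
    rw [eq_div_iff hαne, poch_shift, poch_succ]
    push_cast; ring
  have r3 : poch (α+1+1) k = poch (α+1) k * (α+1+(k:ℝ)) / (α+1) := by
    rw [eq_div_iff hαne, poch_shift]
  have r4 : poch β (m+1) = poch β m * (β+(m:ℝ)) := poch_succ β m
  have r5 : poch (α+1) (m+1) = poch (α+1) m * (α+1+(m:ℝ)) := poch_succ _ m
  have r6 : poch (-β-(m:ℝ)) k = poch (1-β-(m:ℝ)) k * (-β-(m:ℝ)) / ((k:ℝ)-β-(m:ℝ)) := by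
    have h := poch_shift (-β-(m:ℝ)) k
    rw [show (-β-(m:ℝ))+1 = 1-β-(m:ℝ) from by ring] at h
    rw [eq_div_iff h3]
    linear_combination -h
  have r7 : poch (-(m:ℝ)) k = poch (-((m:ℝ)+1)) k * ((k:ℝ)-((m:ℝ)+1)) / (-((m:ℝ)+1)) := by
    have h := poch_shift (-((m:ℝ)+1)) k
    rw [show -((m:ℝ)+1)+1 = -(m:ℝ) from by ring] at h
    rw [eq_div_iff h5]
    linear_combination h
  have h6 : ((m:ℝ)+1+α) ≠ 0 := fun h => hα (-(1+m)) (by push_cast; linarith)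
  have h7 : ((m:ℝ)+1+α+1) ≠ 0 := fun h => hα (-(2+m)) (by push_cast; linarith)
  rw [bco, r1, r2, r3, r4, r5, r6, r7]
  have h5' : (-1 + -(m:ℝ)) ≠ 0 := by
    intro h; have := Nat.cast_nonneg (α := ℝ) m; linarith
  clear hext hk hm1 hα hβ hαβ r1 r2 r3 r4 r5 r6 r7
  simp only [div_mul_eq_mul_div, mul_div_assoc', div_div, div_div_eq_mul_div]
  rw [div_add_div _ _ (by simp [mul_eq_zero, hαne, h1, h2, h3, h4, h5, h5', hA, hR, hK, h6, h7])
        (by simp [mul_eq_zero, hαne, h1, h2, h3, h4, h5, h5', hA, hR, hK, h6, h7]),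
      div_eq_div_iff (by simp [mul_eq_zero, hαne, h1, h2, h3, h4, h5, h5', hA, hR, hK, h6, h7])
        (by simp [mul_eq_zero, hαne, h1, h2, h3, h4, h5, h5', hA, hR, hK, h6, h7])]
  ring

lemma lemB (α β : ℝ) (hα : ∀ m : ℤ, α ≠ (m : ℝ)) (hβ : ∀ m : ℤ, β ≠ (m : ℝ))
    (hαβ : ∀ m : ℤ, α + β ≠ (m : ℝ)) (n : ℕ) (z : ℝ) :
    z * HR (α+1) (β-1) n z = HR α β (n+1) z + dco α β n * HR α β n z := by
  have hn1 : ((n+1:ℕ):ℝ) = (n:ℝ)+1 := by push_cast; ring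
  rw [HR, HR, HR]
  simp only [hn1]
  simp only [show 1 - β - ((n:ℝ)+1) = -β - (n:ℝ) from by ring]
  have hext : ∑ k ∈ Finset.range (n+1+1),
      (poch (-((n:ℝ))) k * poch (α+1) k / (poch (1-β-(n:ℝ)) k * (Nat.factorial k : ℝ)) * z^k)
      = ∑ k ∈ Finset.range (n+1),
      (poch (-((n:ℝ))) k * poch (α+1) k / (poch (1-β-(n:ℝ)) k * (Nat.factorial k : ℝ)) * z^k) := by
    rw [Finset.sum_range_succ, poch_neg_nat (Nat.lt_succ_self n)]
    simp
  rw [← hext]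
  simp only [Finset.mul_sum]
  rw [← Finset.sum_add_distrib]
  rw [Finset.sum_range_succ' (fun k =>
      poch β (n+1) / poch (α+1) (n+1) *
        (poch (-((n:ℝ)+1)) k * poch (α+1) k / (poch (-β-(n:ℝ)) k * (Nat.factorial k : ℝ)) * z^k)
      + dco α β (n:ℝ) *
        (poch β n / poch (α+1) n *
          (poch (-((n:ℝ))) k * poch (α+1) k / (poch (1-β-(n:ℝ)) k * (Nat.factorial k : ℝ)) * z^k))) (n+1)]
  have hApre : poch (α+1) n ≠ 0 := poch_ne_zero (fun i _ h => hα (-(1+i)) (by push_cast; linarith))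
  have h1 : (α+1+(n:ℝ)) ≠ 0 := fun h => hα (-(1+n)) (by push_cast; linarith)
  have hnα1' : ((n:ℝ)+α+1) ≠ 0 := fun h => hα (-(1+n)) (by push_cast; linarith)
  have hF0 : poch β (n+1) / poch (α+1) (n+1) *
        (poch (-((n:ℝ)+1)) 0 * poch (α+1) 0 / (poch (-β-(n:ℝ)) 0 * (Nat.factorial 0 : ℝ)) * z^0)
      + dco α β (n:ℝ) *
        (poch β n / poch (α+1) n *
          (poch (-((n:ℝ))) 0 * poch (α+1) 0 / (poch (1-β-(n:ℝ)) 0 * (Nat.factorial 0 : ℝ)) * z^0)) = 0 := by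
    rw [poch_succ β n, poch_succ (α+1) n, dco]
    simp only [poch_zero, Nat.factorial_zero, pow_zero, Nat.cast_one, mul_one, one_mul, div_one]
    field_simp
    ring
  rw [hF0, add_zero]
  apply Finset.sum_congr rfl
  intro k hk
  have hαne : (α+1 : ℝ) ≠ 0 := fun h => hα (-1) (by push_cast; linarith)
  have hb1n : (β-1+(n:ℝ)) ≠ 0 := fun h => hβ (1-(n:ℤ)) (by push_cast; linarith)
  have hRa : (1-β-(n:ℝ)) ≠ 0 := fun h => hβ (1-(n:ℤ)) (by push_cast; linarith)
  have h4 : (-β-(n:ℝ)) ≠ 0 := fun h => hβ (-(n:ℤ)) (by push_cast; linarith)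
  have hnα1 : ((n:ℝ)+α+1) ≠ 0 := fun h => hα (-(1+n)) (by push_cast; linarith)
  have hk1 : ((k:ℝ)+1) ≠ 0 := by positivity
  have hRk : (1-β-(n:ℝ)+(k:ℝ)) ≠ 0 := fun h => hβ (1-(n:ℤ)+k) (by push_cast; linarith)
  have hR : poch (1-β-(n:ℝ)) k ≠ 0 :=
    poch_ne_zero (fun i _ h => hβ (1-(n:ℤ)+i) (by push_cast; linarith))
  have hK : ((Nat.factorial k : ℕ):ℝ) ≠ 0 := Nat.cast_ne_zero.mpr (Nat.factorial_ne_zero k)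
  have r1 : poch (β-1) n = (β-1) * poch β n / (β-1+(n:ℝ)) := by
    have h := poch_shift (β-1) n
    rw [show (β-1)+1 = β from by ring] at h
    rw [eq_div_iff hb1n]
    linear_combination -h
  have r2 : poch (α+1+1) n = poch (α+1) n * (α+1+(n:ℝ)) / (α+1) := by
    rw [eq_div_iff hαne, poch_shift]
  have r3 : poch (α+1+1) k = poch (α+1) k * (α+1+(k:ℝ)) / (α+1) := by
    rw [eq_div_iff hαne, poch_shift]
  have r4 : poch (1-(β-1)-(n:ℝ)) k = poch (1-β-(n:ℝ)) k * (1-β-(n:ℝ)+(k:ℝ)) / (1-β-(n:ℝ)) := by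
    have h := poch_shift (1-β-(n:ℝ)) k
    rw [show (1-β-(n:ℝ))+1 = 1-(β-1)-(n:ℝ) from by ring] at h
    rw [eq_div_iff hRa]
    linear_combination h
  have r5 : poch β (n+1) = poch β n * (β+(n:ℝ)) := poch_succ β n
  have r6 : poch (α+1) (n+1) = poch (α+1) n * (α+1+(n:ℝ)) := poch_succ _ n
  have r7 : poch (-((n:ℝ)+1)) (k+1) = -((n:ℝ)+1) * poch (-(n:ℝ)) k := by
    rw [poch_succ', show -((n:ℝ)+1)+1 = -(n:ℝ) from by ring]
  have r8 : poch (α+1) (k+1) = poch (α+1) k * (α+1+(k:ℝ)) := poch_succ _ k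
  have r9 : poch (-β-(n:ℝ)) (k+1) = (-β-(n:ℝ)) * poch (1-β-(n:ℝ)) k := by
    rw [poch_succ', show (-β-(n:ℝ))+1 = 1-β-(n:ℝ) from by ring]
  have r10 : poch (-(n:ℝ)) (k+1) = poch (-(n:ℝ)) k * (-(n:ℝ)+(k:ℝ)) := poch_succ _ k
  have r11 : poch (1-β-(n:ℝ)) (k+1) = poch (1-β-(n:ℝ)) k * (1-β-(n:ℝ)+(k:ℝ)) := poch_succ _ k
  have r12 : (((k+1).factorial : ℕ):ℝ) = ((k:ℝ)+1) * ((Nat.factorial k : ℕ):ℝ) := by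
    rw [Nat.factorial_succ]; push_cast; ring
  rw [dco, r1, r2, r3, r4, r5, r6, r7, r8, r9, r10, r11, r12]
  clear hext hk hn1 hα hβ hαβ r1 r2 r3 r4 r5 r6 r7 r8 r9 r10 r11 r12 hF0
  simp only [div_mul_eq_mul_div, mul_div_assoc', div_div, div_div_eq_mul_div]
  rw [div_add_div _ _ (by simp [mul_eq_zero, hαne, hb1n, hRa, h4, hnα1, hk1, hApre, h1, hR, hK, hRk])
        (by simp [mul_eq_zero, hαne, hb1n, hRa, h4, hnα1, hk1, hApre, h1, hR, hK, hRk]),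
      div_eq_div_iff (by simp [mul_eq_zero, hαne, hb1n, hRa, h4, hnα1, hk1, hApre, h1, hR, hK, hRk])
        (by simp [mul_eq_zero, hαne, hb1n, hRa, h4, hnα1, hk1, hApre, h1, hR, hK, hRk])]
  ring

/- ### shifting the nonintegrality hypotheses -/

lemma shift_hα {α : ℝ} (hα : ∀ m : ℤ, α ≠ (m : ℝ)) (j : ℕ) :
    ∀ m : ℤ, α + (j:ℝ) ≠ (m : ℝ) := by
  intro m h; exact hα (m - j) (by push_cast; linarith)

lemma shift_hβ {β : ℝ} (hβ : ∀ m : ℤ, β ≠ (m : ℝ)) (j : ℕ) :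
    ∀ m : ℤ, β - (j:ℝ) ≠ (m : ℝ) := by
  intro m h; exact hβ (m + j) (by push_cast; linarith)

lemma shift_hαβ {α β : ℝ} (hαβ : ∀ m : ℤ, α + β ≠ (m : ℝ)) (j : ℕ) :
    ∀ m : ℤ, (α + (j:ℝ)) + (β - (j:ℝ)) ≠ (m : ℝ) := by
  intro m h; exact hαβ m (by push_cast at h ⊢; linarith)

/- ### connection lemma -/

lemma lemC (α β : ℝ) (hα : ∀ m : ℤ, α ≠ (m : ℝ)) (hβ : ∀ m : ℤ, β ≠ (m : ℝ))
    (hαβ : ∀ m : ℤ, α + β ≠ (m : ℝ)) :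
    ∀ (j n : ℕ), j ≤ n → ∀ z : ℝ,
      HR (α + (j:ℝ)) (β - (j:ℝ)) n z
        = ∑ l ∈ Finset.range (j+1), Ccoef α β n j l * HR α β (n-l) z := by
  intro j
  induction j with
  | zero =>
    intro n _ z
    simp [Ccoef_zero]
  | succ j ih =>
    intro n hn z
    have e1 : α + ((j+1 : ℕ):ℝ) = (α + (j:ℝ)) + 1 := by push_cast; ring
    have e2 : β - ((j+1 : ℕ):ℝ) = (β - (j:ℝ)) - 1 := by push_cast; ring
    rw [e1, e2, lemA (α + (j:ℝ)) (β - (j:ℝ)) (shift_hα hα j) (shift_hβ hβ j) (shift_hαβ hαβ j) n z,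
        ih n (by omega) z, ih (n-1) (by omega) z]
    have hsub : ∀ l : ℕ, n - 1 - l = n - (l+1) := by intro l; omega
    rw [Finset.sum_range_succ' (fun l => Ccoef α β n (j+1) l * HR α β (n-l) z) (j+1)]
    simp only [Ccoef_rec, Ccoef_zero, Nat.sub_zero, one_mul, add_mul]
    rw [Finset.sum_add_distrib]
    rw [Finset.sum_range_succ (fun l => Ccoef α β n j (l+1) * HR α β (n-(l+1)) z) j]
    rw [Ccoef_out α β n j (j+1) (by omega), zero_mul, add_zero]
    rw [Finset.sum_range_succ' (fun l => Ccoef α β n j l * HR α β (n-l) z) j]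
    rw [Ccoef_zero, Nat.sub_zero, one_mul, Finset.mul_sum]
    simp only [hsub, mul_assoc]
    ring

/- ### span infrastructure -/

def InSpan (α β : ℝ) (a b : ℕ) (f : ℝ → ℝ) : Prop :=
  ∃ c : ℕ → ℝ, ∀ z, f z = ∑ m ∈ Finset.Icc a b, c m * HR α β m z

lemma inSpan_base (α β : ℝ) {a b m : ℕ} (h1 : a ≤ m) (h2 : m ≤ b) :
    InSpan α β a b (fun z => HR α β m z) := by
  refine ⟨fun m' => if m' = m then 1 else 0, fun z => ?_⟩
  rw [Finset.sum_eq_single m]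
  · simp
  · intro b' _ hb'; simp [hb']
  · intro hm; exact absurd (Finset.mem_Icc.mpr ⟨h1, h2⟩) hm

lemma inSpan_zero (α β : ℝ) (a b : ℕ) : InSpan α β a b (fun _ => 0) :=
  ⟨fun _ => 0, fun z => by simp⟩

lemma inSpan_add {α β : ℝ} {a b : ℕ} {f g : ℝ → ℝ}
    (hf : InSpan α β a b f) (hg : InSpan α β a b g) :
    InSpan α β a b (fun z => f z + g z) := by
  obtain ⟨c, hc⟩ := hf; obtain ⟨d, hd⟩ := hg
  refine ⟨fun m => c m + d m, fun z => ?_⟩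
  show f z + g z = _
  rw [hc, hd, ← Finset.sum_add_distrib]
  apply Finset.sum_congr rfl; intros; ring

lemma inSpan_smul {α β : ℝ} {a b : ℕ} {f : ℝ → ℝ} (r : ℝ)
    (hf : InSpan α β a b f) : InSpan α β a b (fun z => r * f z) := by
  obtain ⟨c, hc⟩ := hf
  refine ⟨fun m => r * c m, fun z => ?_⟩
  show r * f z = _
  rw [hc, Finset.mul_sum]
  apply Finset.sum_congr rfl; intros; ring

lemma inSpan_congr {α β : ℝ} {a b : ℕ} {f g : ℝ → ℝ} (h : ∀ z, f z = g z)
    (hf : InSpan α β a b f) : InSpan α β a b g := by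
  obtain ⟨c, hc⟩ := hf
  exact ⟨c, fun z => (h z) ▸ hc z⟩

lemma inSpan_mono {α β : ℝ} {a b a' b' : ℕ} {f : ℝ → ℝ} (ha : a' ≤ a) (hb : b ≤ b')
    (hf : InSpan α β a b f) : InSpan α β a' b' f := by
  obtain ⟨c, hc⟩ := hf
  refine ⟨fun m => if m ∈ Finset.Icc a b then c m else 0, fun z => ?_⟩
  have h1 : ∑ m ∈ Finset.Icc a b, c m * HR α β m z
      = ∑ m ∈ Finset.Icc a b, (if m ∈ Finset.Icc a b then c m else 0) * HR α β m z :=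
    Finset.sum_congr rfl (fun m hm => by rw [if_pos hm])
  rw [hc, h1]
  exact Finset.sum_subset (Finset.Icc_subset_Icc ha hb)
    (fun m _ hm => by rw [if_neg hm, zero_mul])

lemma inSpan_sum {α β : ℝ} {a b : ℕ} {ι : Type*} (s : Finset ι) (f : ι → ℝ → ℝ)
    (h : ∀ i ∈ s, InSpan α β a b (f i)) :
    InSpan α β a b (fun z => ∑ i ∈ s, f i z) := by
  classical
  induction s using Finset.induction with
  | empty => exact inSpan_congr (by simp) (inSpan_zero α β a b)
  | @insert i s hi ih =>
    refine inSpan_congr (fun z => ?_) (inSpan_add (h i (by simp)) (ih (fun i' hi' => h i' (by simp [hi']))))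
    show f i z + _ = _
    rw [Finset.sum_insert hi]

/- ### the power lemma -/

lemma lemD (α β : ℝ) (hα : ∀ m : ℤ, α ≠ (m : ℝ)) (hβ : ∀ m : ℤ, β ≠ (m : ℝ))
    (hαβ : ∀ m : ℤ, α + β ≠ (m : ℝ)) :
    ∀ j i n, i ≤ j →
      InSpan α β (n + i - j) (n + i) (fun z => z^i * HR (α + (j:ℝ)) (β - (j:ℝ)) n z) := by
  intro j
  induction j with
  | zero =>
    intro i n hi
    interval_cases i
    refine inSpan_congr (fun z => ?_) (inSpan_base α β (le_refl n) (le_refl n))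
    simp
  | succ j ih =>
    intro i n hi
    have e1 : α + ((j+1 : ℕ):ℝ) = (α + (j:ℝ)) + 1 := by push_cast; ring
    have e2 : β - ((j+1 : ℕ):ℝ) = (β - (j:ℝ)) - 1 := by push_cast; ring
    match i with
    | 0 =>
      have h1 := ih 0 n (by omega)
      have h2 := ih 0 (n-1) (by omega)
      refine inSpan_congr (fun z => ?_)
        (inSpan_add (inSpan_mono (by omega) (by omega) h1)
          (inSpan_smul (bco (α + (j:ℝ)) (β - (j:ℝ)) (n:ℝ)) (inSpan_mono (by omega) (by omega) h2)))
      rw [e1, e2, lemA (α + (j:ℝ)) (β - (j:ℝ)) (shift_hα hα j) (shift_hβ hβ j) (shift_hαβ hαβ j) n z]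
      simp
    | (i+1) =>
      have h1 := ih i (n+1) (by omega)
      have h2 := ih i n (by omega)
      refine inSpan_congr (fun z => ?_)
        (inSpan_add (inSpan_mono (by omega) (by omega) h1)
          (inSpan_mono (by omega) (by omega) (inSpan_smul (dco (α + (j:ℝ)) (β - (j:ℝ)) (n:ℝ)) h2)))
      have key := lemB (α + (j:ℝ)) (β - (j:ℝ)) (shift_hα hα j) (shift_hβ hβ j) (shift_hαβ hαβ j) n z
      rw [e1, e2]
      symm
      calc z^(i+1) * HR ((α + (j:ℝ)) + 1) ((β - (j:ℝ)) - 1) n z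
          = z^i * (z * HR ((α + (j:ℝ)) + 1) ((β - (j:ℝ)) - 1) n z) := by ring
        _ = z^i * (HR (α + (j:ℝ)) (β - (j:ℝ)) (n+1) z
              + dco (α + (j:ℝ)) (β - (j:ℝ)) (n:ℝ) * HR (α + (j:ℝ)) (β - (j:ℝ)) n z) := by rw [key]
        _ = z^i * HR (α + (j:ℝ)) (β - (j:ℝ)) (n+1) z
              + dco (α + (j:ℝ)) (β - (j:ℝ)) (n:ℝ) * (z^i * HR (α + (j:ℝ)) (β - (j:ℝ)) n z) := by ring

/-- For `1 ≤ l0 ≤ n−1` and every real polynomial `q` of degree `l0+1` with `q(0) = 0`, the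
function `q(z) · Σ_{l=0}^{l0+1} C^{(l)}_{n,l0+1} P_{n−l}(z)` lies in the span of
`{P_{n−l0}, …, P_{n+l0+1}}`. -/
theorem stmt15 (α β : ℝ)
    (hα : ∀ m : ℤ, α ≠ (m : ℝ)) (hβ : ∀ m : ℤ, β ≠ (m : ℝ))
    (hαβ : ∀ m : ℤ, α + β ≠ (m : ℝ))
    (n l0 : ℕ) (hl0 : 1 ≤ l0) (hln : l0 + 1 ≤ n)
    (q : Polynomial ℝ) (hq : q.degree = (l0 + 1 : ℕ)) (hq0 : q.eval 0 = 0) :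
    ∃ c : ℕ → ℝ, ∀ z : ℝ,
      q.eval z * ∑ l ∈ Finset.range (l0 + 2), Ccoef α β n (l0 + 1) l * HR α β (n - l) z
        = ∑ m ∈ Finset.Icc (n - l0) (n + l0 + 1), c m * HR α β m z := by
  have hnd : q.natDegree = l0 + 1 := Polynomial.natDegree_eq_of_degree_eq_some hq
  have hspan : InSpan α β (n - l0) (n + l0 + 1)
      (fun z => ∑ i ∈ Finset.range (l0 + 2), q.coeff i * (z^i * HR (α + ((l0+1:ℕ):ℝ)) (β - ((l0+1:ℕ):ℝ)) n z)) := by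
    apply inSpan_sum
    intro i hi
    match i with
    | 0 =>
      have hc0 : q.coeff 0 = 0 := by rwa [Polynomial.coeff_zero_eq_eval_zero]
      refine inSpan_congr (fun z => ?_) (inSpan_zero α β _ _)
      rw [hc0]; ring
    | (i+1) =>
      have hd := lemD α β hα hβ hαβ (l0+1) (i+1) n (by simp at hi; omega)
      exact inSpan_smul (q.coeff (i+1)) (inSpan_mono (by omega) (by simp at hi; omega) hd)
  obtain ⟨c, hc⟩ := hspan
  refine ⟨c, fun z => ?_⟩
  rw [← hc z]
  rw [← lemC α β hα hβ hαβ (l0+1) n (by omega) z]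
  rw [Polynomial.eval_eq_sum_range, hnd, Finset.sum_mul]
  apply Finset.sum_congr rfl
  intro i _
  ring
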